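/- Let B(t) be the analytic continuation of (1 - 2t - sqrt(1-4t))/(2t) to the slit plane C \ [1/4, infinity). For real u, the function t -> F_u(t) = B(1+B)(1+2B-B^2)/((1-B)(1+B-2B cos u)^2) is analytic on D' = C \ ([1/4, infinity) union (-infinity, -3/4]). In particular, in D', 1 - B(t) never vanishes and 1 + B(t) - 2 B(t) cos u never vanishes. -/

import Mathlib

/-- The slit plane `D = ℂ \ [1/4, ∞)`. -/
def slitPlane14 : Set ℂ := {t : ℂ | ¬ (t.im = 0 ∧ 1/4 ≤ t.re)}

/-- The doubly-slit plane `D' = ℂ \ ([1/4,∞) ∪ (-∞,-3/4])`. -/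
def slitPlane14' : Set ℂ :=
  {t : ℂ | ¬ (t.im = 0 ∧ 1/4 ≤ t.re) ∧ ¬ (t.im = 0 ∧ t.re ≤ -3/4)}

lemma slitPlane14_open : IsOpen slitPlane14 := by
  have : slitPlane14 = ({t : ℂ | t.im = 0} ∩ {t : ℂ | 1/4 ≤ t.re})ᶜ := by
    ext t; simp [slitPlane14, Set.mem_setOf_eq]
  rw [this]
  exact (IsClosed.inter (isClosed_eq Complex.continuous_im continuous_const)
    (isClosed_le continuous_const Complex.continuous_re)).isOpen_compl

lemma zero_mem_slit : (0:ℂ) ∈ slitPlane14 := by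
  simp [slitPlane14]

lemma one_sub_four_ne {t : ℂ} (ht : t ∈ slitPlane14) : (1:ℂ) - 4*t ≠ 0 := by
  intro h
  have ht4 : t = 1/4 := by linear_combination -h/4
  apply ht
  rw [ht4]
  constructor <;> norm_num

lemma sqrt_mul_self {z : ℂ} (hz : z ≠ 0) : (z ^ ((1:ℂ)/2)) * (z ^ ((1:ℂ)/2)) = z := by
  rw [← Complex.cpow_add _ _ hz]
  norm_num

lemma keyA (B : ℂ → ℂ)
    (hBeq : ∀ t ∈ slitPlane14, t ≠ 0 →
      B t = (1 - 2*t - (1 - 4*t) ^ ((1:ℂ)/2)) / (2*t)) :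
    ∀ t ∈ slitPlane14, t ≠ 0 → t * (1 + B t)^2 = B t := by
  intro t ht ht0
  have hne := one_sub_four_ne ht
  have hs : (2:ℂ)*t*B t = 1 - 2*t - (1 - 4*t) ^ ((1:ℂ)/2) := by
    rw [hBeq t ht ht0]; field_simp
  have hsq := sqrt_mul_self hne
  have h4 : (4*t) * (t * (1 + B t)^2) = (4*t) * (B t) := by
    linear_combination hsq - (1 - 2*t - 2*t*B t + (1-4*t)^((1:ℂ)/2)) * hs
  exact mul_left_cancel₀ (by simpa using ht0) h4

lemma keyA' (B : ℂ → ℂ) (hB : AnalyticOnNhd ℂ B slitPlane14)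
    (hBeq : ∀ t ∈ slitPlane14, t ≠ 0 →
      B t = (1 - 2*t - (1 - 4*t) ^ ((1:ℂ)/2)) / (2*t)) :
    ∀ t ∈ slitPlane14, t * (1 + B t)^2 = B t := by
  intro t ht
  rcases eq_or_ne t 0 with rfl | ht0
  · set f : ℂ → ℂ := fun z => z * (1 + B z)^2 - B z with hf
    have hB0c : ContinuousAt B 0 := (hB 0 zero_mem_slit).continuousAt
    have hfc : ContinuousAt f 0 := by fun_prop
    have h1 : Filter.Tendsto f (nhdsWithin 0 {(0:ℂ)}ᶜ) (nhds (f 0)) :=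
      hfc.continuousWithinAt
    have h2 : Filter.Tendsto f (nhdsWithin 0 {(0:ℂ)}ᶜ) (nhds 0) := by
      have hev : ∀ᶠ z in nhdsWithin 0 {(0:ℂ)}ᶜ, f z = 0 := by
        filter_upwards [eventually_nhdsWithin_of_eventually_nhds
          (slitPlane14_open.eventually_mem zero_mem_slit), self_mem_nhdsWithin] with z hz hz0
        have hz' := keyA B hBeq z hz hz0
        simp only [hf]
        linear_combination hz'
      exact Filter.Tendsto.congr' (by filter_upwards [hev] with z h using h.symm) tendsto_const_nhds
    have h3 : f 0 = 0 := tendsto_nhds_unique h1 h2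
    have hB0 : B 0 = 0 := by
      simp only [hf, zero_mul, zero_sub, neg_eq_zero] at h3
      exact h3
    simp [hB0]
  · exact keyA B hBeq t ht ht0


lemma main_nonvanish (B : ℂ → ℂ) (hB : AnalyticOnNhd ℂ B slitPlane14)
    (hBeq : ∀ t ∈ slitPlane14, t ≠ 0 →
      B t = (1 - 2*t - (1 - 4*t) ^ ((1:ℂ)/2)) / (2*t)) :
    ∀ t ∈ slitPlane14', ∀ c : ℝ, (1 ≤ c ∨ c ≤ -1/3) → B t ≠ (c:ℂ) := by
  intro t ht' c hc hBc
  obtain ⟨h1, h2⟩ := ht'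
  have ht : t ∈ slitPlane14 := h1
  have hkey := keyA' B hB hBeq t ht
  rw [hBc] at hkey
  have hc0 : c ≠ 0 := by rcases hc with h | h <;> intro h0 <;> rw [h0] at h <;> norm_num at h
  have ht0 : t ≠ 0 := by
    rintro rfl
    have h0 : (0:ℂ) = (c:ℂ) := by linear_combination hkey
    exact hc0 (by exact_mod_cast h0.symm)
  have hc1 : (1:ℝ) + c ≠ 0 := by
    intro h
    have hcC : (1:ℂ) + (c:ℂ) = 0 := by exact_mod_cast congrArg (Complex.ofReal) h
    have h0 : (0:ℂ) = (c:ℂ) := by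
      calc (0:ℂ) = t * (1 + (c:ℂ))^2 := by rw [hcC]; ring
        _ = c := hkey
    exact hc0 (by exact_mod_cast h0.symm)
  have hc1C : ((1:ℂ) + (c:ℂ)) ≠ 0 := by
    intro h; apply hc1
    have := congrArg Complex.re h
    simpa using this
  have htval : t = ((c/(1+c)^2 : ℝ) : ℂ) := by
    push_cast
    rw [eq_div_iff (pow_ne_zero 2 hc1C)]
    exact hkey
  have htim : t.im = 0 := by rw [htval, Complex.ofReal_im]
  have htre : t.re = c/(1+c)^2 := by rw [htval, Complex.ofReal_re]
  have hlt : t.re < 1/4 := by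
    by_contra hcon
    exact h1 ⟨htim, by linarith [not_lt.mp hcon]⟩
  have hgt : -3/4 < t.re := by
    by_contra hcon
    exact h2 ⟨htim, by linarith [not_lt.mp hcon]⟩
  have hsq1c : (0:ℝ) < (1+c)^2 := by positivity
  -- the square-root sign argument, applicable when |c| > 1
  have signcase : (1-c)/(1+c) < 0 → False := by
    intro hr
    set r : ℝ := (1-c)/(1+c) with hrdef
    have hsC : (1 - 4*t) ^ ((1:ℂ)/2) = 1 - 2*t - 2*t*(c:ℂ) := by
      have hB2 := hBeq t ht ht0
      rw [hBc] at hB2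
      have h2t : (2:ℂ)*t ≠ 0 := by simpa using ht0
      field_simp at hB2
      rw [mul_comm t 4] at hB2
      linear_combination hB2
    have hs_val : (1:ℂ) - 2*t - 2*t*(c:ℂ) = ((r : ℝ) : ℂ) := by
      rw [htval, hrdef]
      push_cast
      field_simp
      ring
    have h14 : (1:ℂ) - 4*t = (((r^2 : ℝ)) : ℂ) := by
      rw [htval, hrdef]
      push_cast
      field_simp
      ring
    have habs : ((r:ℝ):ℂ) = ((|r| : ℝ) : ℂ) := by
      rw [← hs_val, ← hsC, h14]
      rw [show ((1:ℂ)/2) = (((1/2 : ℝ) : ℂ)) by norm_num]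
      rw [← Complex.ofReal_cpow (sq_nonneg r)]
      rw [show ((1:ℝ)/2) = ((1:ℝ)/2) from rfl, ← Real.sqrt_eq_rpow, Real.sqrt_sq_eq_abs]
    have : r = |r| := by exact_mod_cast habs
    have : (0:ℝ) ≤ r := this ▸ abs_nonneg r
    linarith
  rcases hc with hc' | hc'
  · rcases eq_or_lt_of_le hc' with hceq | hcgt
    · -- c = 1 forces t = 1/4
      rw [htre, ← hceq] at hlt
      norm_num at hlt
    · exact signcase (div_neg_of_neg_of_pos (by linarith) (by linarith))
  · rcases lt_trichotomy c (-1) with hclt | hceq | hcgt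
    · exact signcase (div_neg_of_pos_of_neg (by linarith) (by linarith))
    · exact hc1 (by rw [hceq]; ring)
    · -- -1 < c ≤ -1/3 forces t ≤ -3/4
      rw [htre] at hgt
      have hcc : c = (c/(1+c)^2) * (1+c)^2 := by field_simp
      nlinarith [mul_nonneg (by linarith : (0:ℝ) ≤ -(3*c+1)) (by linarith : (0:ℝ) ≤ c+3)]

/-- Let `B` be the analytic continuation of `(1-2t-√(1-4t))/(2t)` to `D = ℂ \ [1/4,∞)`.
For each real `u`, the function `F_u(t) = B(1+B)(1+2B-B²)/((1-B)(1+B-2B cos u)²)` is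
analytic on `D' = ℂ \ ([1/4,∞) ∪ (-∞,-3/4])`; in particular `1 - B(t)` and
`1 + B(t) - 2 B(t) cos u` never vanish on `D'`. -/
theorem Fu_analytic_on_slit_plane
    (B : ℂ → ℂ) (hB : AnalyticOnNhd ℂ B slitPlane14)
    (hBeq : ∀ t ∈ slitPlane14, t ≠ 0 →
      B t = (1 - 2*t - (1 - 4*t) ^ ((1:ℂ)/2)) / (2*t))
    (u : ℝ) :
    AnalyticOnNhd ℂ
      (fun t => B t * (1 + B t) * (1 + 2*B t - (B t)^2) /
        ((1 - B t) * (1 + B t - 2 * B t * Real.cos u)^2)) slitPlane14' ∧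
    ∀ t ∈ slitPlane14', 1 - B t ≠ 0 ∧ 1 + B t - 2 * B t * Real.cos u ≠ 0 := by
  have hnv := main_nonvanish B hB hBeq
  have key : ∀ t ∈ slitPlane14', 1 - B t ≠ 0 ∧ 1 + B t - 2 * B t * Real.cos u ≠ 0 := by
    intro t ht
    constructor
    · intro h
      have hBt : B t = ((1:ℝ):ℂ) := by push_cast; linear_combination -h
      exact hnv t ht 1 (Or.inl le_rfl) hBt
    · intro h
      push_cast at h
      rcases eq_or_ne (2 * Real.cos u - 1) 0 with hd | hd
      · have hdC : 2 * Complex.cos (u:ℂ) - 1 = 0 := by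
          have := congrArg (fun x : ℝ => (x : ℂ)) hd
          push_cast at this
          exact this
        have h10 : (1:ℂ) = 0 := by linear_combination h + B t * hdC
        exact one_ne_zero h10
      · have hdC : 2 * Complex.cos (u:ℂ) - 1 ≠ 0 := by
          intro h0
          apply hd
          have h1 : ((2 * Real.cos u - 1 : ℝ) : ℂ) = 0 := by push_cast; exact h0
          exact_mod_cast h1
        set c : ℝ := (2 * Real.cos u - 1)⁻¹ with hcdef
        have hBt : B t = (c : ℂ) := by
          rw [hcdef]
          push_cast
          rw [inv_eq_one_div, eq_div_iff hdC]
          linear_combination -h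
        have hcd : c * (2 * Real.cos u - 1) = 1 := inv_mul_cancel₀ hd
        have hcos1 : Real.cos u ≤ 1 := Real.cos_le_one u
        have hcos2 : -1 ≤ Real.cos u := Real.neg_one_le_cos u
        have hrange : 1 ≤ c ∨ c ≤ -1/3 := by
          rcases lt_or_gt_of_ne hd with hneg | hpos
          · right; nlinarith
          · left; nlinarith
        exact hnv t ht c hrange hBt
  refine ⟨?_, key⟩
  intro t ht
  have hBt := hB t (ht.1)
  obtain ⟨hn1, hn2⟩ := key t ht
  have hnum : AnalyticAt ℂ (fun z => B z * (1 + B z) * (1 + 2*B z - (B z)^2)) t :=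
    (hBt.mul (analyticAt_const.add hBt)).mul
      ((analyticAt_const.add (analyticAt_const.mul hBt)).sub (hBt.pow 2))
  have hden : AnalyticAt ℂ
      (fun z => (1 - B z) * (1 + B z - 2 * B z * (Real.cos u : ℂ))^2) t :=
    (analyticAt_const.sub hBt).mul
      (((analyticAt_const.add hBt).sub ((analyticAt_const.mul hBt).mul analyticAt_const)).pow 2)
  exact hnum.div hden (mul_ne_zero hn1 (pow_ne_zero 2 hn2))
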